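/- arXiv:1009.5615 — 4 statements merged into one kernel-verified Lean document; each statement's English description precedes it below -/
import Mathlib

section
/- Let ν be the standard Gaussian probability measure on ℝⁿ, i.e. the measure with density x ↦ π^{−n/2}·exp(−‖x‖²) with respect to Lebesgue measure, and let r > 0 and B_r(0) be the open Euclidean ball of radius r centered at 0. If n is even, then ν(B_r(0)) = e^{−r²} ∑_{k=n/2}^{∞} r^{2k}/k!. If n is odd, then ν(B_r(0)) = e^{−r²} ∑_{k=(n+1)/2}^{∞} r^{2k−1}/Γ(k+1/2). -/
open MeasureTheory
open Real Set Filter intervalIntegral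

lemma igamma_integrable (s x : ℝ) (hs : -1 < s) :
    IntervalIntegrable (fun u => u ^ s * Real.exp (-u)) volume 0 x :=
  (intervalIntegrable_rpow' hs).mul_continuousOn
    ((Real.continuous_exp.comp continuous_neg).continuousOn)

lemma igamma_rec (s x : ℝ) (hs : 0 < s) (hx : 0 ≤ x) :
    ∫ u in (0:ℝ)..x, u ^ s * Real.exp (-u) =
      s * (∫ u in (0:ℝ)..x, u ^ (s-1) * Real.exp (-u)) - x ^ s * Real.exp (-x) := by
  have h1 := igamma_integrable (s-1) x (by linarith)
  have h2 := igamma_integrable s x (by linarith)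
  have hI1 : IntervalIntegrable (fun u => s * u ^ (s-1) * Real.exp (-u)) volume 0 x := by
    simpa only [mul_assoc] using h1.const_mul s
  have hI2 : IntervalIntegrable (fun u => u ^ s * -Real.exp (-u)) volume 0 x := by
    simpa only [mul_neg, Pi.neg_def] using h2.neg
  have key : ∫ u in (0:ℝ)..x,
      (s * u ^ (s-1) * Real.exp (-u) + u ^ s * -Real.exp (-u)) =
      x ^ s * Real.exp (-x) - 0 ^ s * Real.exp (-(0:ℝ)) := by
    apply integral_eq_sub_of_hasDeriv_right_of_le hx
    · apply ContinuousOn.mul _ ((Real.continuous_exp.comp continuous_neg).continuousOn)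
      intro u _
      exact (Real.continuousAt_rpow_const u s (Or.inr hs.le)).continuousWithinAt
    · intro u hu
      have h1' : HasDerivAt (fun u : ℝ => u ^ s) (s * u ^ (s-1)) u :=
        Real.hasDerivAt_rpow_const (Or.inl (ne_of_gt hu.1))
      have h2' : HasDerivAt (fun u : ℝ => Real.exp (-u)) (-Real.exp (-u)) u := by
        simpa [Function.comp_def] using (Real.hasDerivAt_exp (-u)).comp u (hasDerivAt_neg u)
      exact (h1'.mul h2').hasDerivWithinAt
    · exact hI1.add hI2
  rw [Real.zero_rpow (ne_of_gt hs)] at key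
  rw [integral_add hI1 hI2] at key
  simp only [mul_assoc, mul_neg, intervalIntegral.integral_const_mul, intervalIntegral.integral_neg] at key
  rw [neg_zero, Real.exp_zero] at key
  linarith [key]

lemma igamma_partial (s x : ℝ) (hs : 0 < s) (hx : 0 ≤ x) (N : ℕ) :
    (∫ u in (0:ℝ)..x, u ^ (s-1) * Real.exp (-u)) / Real.Gamma s =
      Real.exp (-x) * ∑ k ∈ Finset.range N, x ^ (s + k) / Real.Gamma (s + k + 1)
        + (∫ u in (0:ℝ)..x, u ^ (s + N - 1) * Real.exp (-u)) / Real.Gamma (s + N) := by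
  induction N with
  | zero => simp
  | succ N ih =>
    rw [ih, Finset.sum_range_succ, mul_add]
    have hsN : (0:ℝ) < s + N := by positivity
    have hg : (0:ℝ) < Real.Gamma (s + N) := Real.Gamma_pos_of_pos hsN
    have hg1 : (0:ℝ) < Real.Gamma (s + N + 1) := Real.Gamma_pos_of_pos (by linarith)
    have hrec := igamma_rec (s + N) x hsN hx
    have hΓ : Real.Gamma (s + N + 1) = (s + N) * Real.Gamma (s + N) :=
      Real.Gamma_add_one hsN.ne'
    have e1 : s + ((N:ℕ)+1:ℕ) - 1 = s + N := by push_cast; ring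
    have e2 : (s + ((N:ℕ)+1:ℕ) : ℝ) = s + N + 1 := by push_cast; ring
    have e3 : s + N - 1 + 1 = s + N := by ring
    rw [e1, e2, add_assoc]
    congr 1
    have hrec' : (∫ u in (0:ℝ)..x, u ^ (s + N - 1 + 1) * Real.exp (-u)) =
        (s + N) * (∫ u in (0:ℝ)..x, u ^ (s + N - 1) * Real.exp (-u))
          - x ^ (s + N) * Real.exp (-x) := by
      rw [e3]; simpa using igamma_rec (s+N) x hsN hx
    rw [e3] at hrec'
    rw [hΓ]
    field_simp
    nlinarith [hrec', hg]

lemma igamma_nonneg (s x : ℝ) (hx : 0 ≤ x) :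
    0 ≤ ∫ u in (0:ℝ)..x, u ^ (s-1) * Real.exp (-u) := by
  apply intervalIntegral.integral_nonneg hx
  intro u hu
  exact mul_nonneg (Real.rpow_nonneg hu.1 _) (Real.exp_pos _).le

lemma igamma_le (s x : ℝ) (hs : 0 < s) (hx : 0 ≤ x) :
    (∫ u in (0:ℝ)..x, u ^ (s-1) * Real.exp (-u)) ≤ x ^ s / s := by
  have h1 : (∫ u in (0:ℝ)..x, u ^ (s-1) * Real.exp (-u)) ≤ ∫ u in (0:ℝ)..x, u ^ (s-1) := by
    apply intervalIntegral.integral_mono_on hx (igamma_integrable _ _ (by linarith))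
      (intervalIntegrable_rpow' (by linarith))
    intro u hu
    calc u ^ (s-1) * Real.exp (-u) ≤ u ^ (s-1) * 1 := by
          exact mul_le_mul_of_nonneg_left
            (Real.exp_le_one_iff.mpr (neg_nonpos.mpr hu.1)) (Real.rpow_nonneg hu.1 _)
      _ = u ^ (s-1) := mul_one _
  have h2 : ∫ u in (0:ℝ)..x, u ^ (s-1) = (x ^ s - (0:ℝ) ^ s) / s := by
    rw [integral_rpow (Or.inl (by linarith))]
    norm_num
  rw [h2, Real.zero_rpow hs.ne'] at h1
  simpa using h1

lemma gamma_fact_le (s : ℝ) (hs : 0 < s) (N : ℕ) :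
    (N.factorial : ℝ) * Real.Gamma (s + 1) ≤ Real.Gamma (s + N + 1) := by
  induction N with
  | zero => simp
  | succ N ih =>
    have hg1 : (0:ℝ) < Real.Gamma (s + N + 1) := Real.Gamma_pos_of_pos (by positivity)
    have e2 : (s + ((N:ℕ)+1:ℕ) + 1 : ℝ) = (s + N + 1) + 1 := by push_cast; ring
    rw [e2, show Real.Gamma ((s + N + 1) + 1) = (s + N + 1) * Real.Gamma (s + N + 1) from
      Real.Gamma_add_one (by positivity)]
    have : ((N+1).factorial : ℝ) = (N+1) * N.factorial := by
      rw [Nat.factorial_succ]; push_cast; ring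
    rw [this]
    have hb : ((N:ℝ) + 1) * ((N.factorial : ℝ) * Real.Gamma (s + 1)) ≤
        ((N:ℝ) + 1) * Real.Gamma (s + N + 1) := by
      apply mul_le_mul_of_nonneg_left ih (by positivity)
    calc ((N:ℝ)+1) * (N.factorial:ℝ) * Real.Gamma (s+1)
        = ((N:ℝ)+1) * ((N.factorial:ℝ) * Real.Gamma (s+1)) := by ring
      _ ≤ ((N:ℝ)+1) * Real.Gamma (s + N + 1) := hb
      _ ≤ (s + N + 1) * Real.Gamma (s + N + 1) := by nlinarith [hg1]

lemma igamma_series (s x : ℝ) (hs : 0 < s) (hx : 0 < x) :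
    (∫ u in (0:ℝ)..x, u ^ (s-1) * Real.exp (-u)) / Real.Gamma s =
      Real.exp (-x) * ∑' k : ℕ, x ^ (s + k) / Real.Gamma (s + k + 1) := by
  set γ := (∫ u in (0:ℝ)..x, u ^ (s-1) * Real.exp (-u)) / Real.Gamma s with hγ
  have hterm : ∀ k : ℕ, 0 ≤ x ^ (s + (k:ℝ)) / Real.Gamma (s + k + 1) := fun k =>
    div_nonneg (Real.rpow_nonneg hx.le _) (Real.Gamma_pos_of_pos (by positivity)).le
  have htail : Tendsto (fun N : ℕ =>
      (∫ u in (0:ℝ)..x, u ^ (s + N - 1) * Real.exp (-u)) / Real.Gamma (s + N))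
      atTop (nhds 0) := by
    apply squeeze_zero
    · intro N
      exact div_nonneg (igamma_nonneg _ _ hx.le)
        (Real.Gamma_pos_of_pos (by positivity)).le
    · intro N
      show _ ≤ (x ^ s / Real.Gamma (s+1)) * (x ^ N / N.factorial)
      have hsN : (0:ℝ) < s + N := by positivity
      have hg : (0:ℝ) < Real.Gamma (s + N) := Real.Gamma_pos_of_pos hsN
      have hΓ : Real.Gamma (s + N + 1) = (s + N) * Real.Gamma (s + N) :=
        Real.Gamma_add_one hsN.ne'
      have h1 : (∫ u in (0:ℝ)..x, u ^ (s + N - 1) * Real.exp (-u)) / Real.Gamma (s + N)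
          ≤ (x ^ (s + N) / (s + N)) / Real.Gamma (s + N) := by
        gcongr
        exact igamma_le (s+N) x hsN hx.le
      have h2 : x ^ (s + (N:ℝ)) / (s + N) / Real.Gamma (s + N)
          = x ^ (s + (N:ℝ)) / Real.Gamma (s + N + 1) := by
        rw [hΓ]; field_simp
      have hgf := gamma_fact_le s hs N
      have hg1 : (0:ℝ) < Real.Gamma (s + 1) := Real.Gamma_pos_of_pos (by positivity)
      have hfac : (0:ℝ) < (N.factorial : ℝ) := by positivity
      have h3 : x ^ (s + (N:ℝ)) / Real.Gamma (s + N + 1)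
          ≤ x ^ (s + (N:ℝ)) / ((N.factorial : ℝ) * Real.Gamma (s + 1)) := by
        gcongr
      have h4 : x ^ (s + (N:ℝ)) / ((N.factorial : ℝ) * Real.Gamma (s + 1))
          = (x ^ s / Real.Gamma (s+1)) * (x ^ N / N.factorial) := by
        rw [Real.rpow_add hx, Real.rpow_natCast]
        field_simp
      calc (∫ u in (0:ℝ)..x, u ^ (s + N - 1) * Real.exp (-u)) / Real.Gamma (s + N)
          ≤ x ^ (s + (N:ℝ)) / (s + N) / Real.Gamma (s + N) := h1
        _ = x ^ (s + (N:ℝ)) / Real.Gamma (s + N + 1) := h2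
        _ ≤ x ^ (s + (N:ℝ)) / ((N.factorial : ℝ) * Real.Gamma (s + 1)) := h3
        _ = (x ^ s / Real.Gamma (s+1)) * (x ^ N / N.factorial) := h4
    · have := FloorSemiring.tendsto_pow_div_factorial_atTop (K := ℝ) x
      have h := this.const_mul (x ^ s / Real.Gamma (s+1))
      simpa using h
  have hS : Tendsto (fun N : ℕ => ∑ k ∈ Finset.range N, x ^ (s + (k:ℝ)) / Real.Gamma (s + k + 1))
      atTop (nhds (Real.exp x * γ)) := by
    have h := htail.const_mul (Real.exp x)
    rw [mul_zero] at h
    have h2 := (tendsto_const_nhds (x := Real.exp x * γ) (f := (atTop : Filter ℕ))).sub h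
    rw [sub_zero] at h2
    apply h2.congr
    intro N
    have hp := igamma_partial s x hs hx.le N
    rw [hγ, hp, mul_add, ← mul_assoc, ← Real.exp_add]
    simp
  have hsum : HasSum (fun k : ℕ => x ^ (s + (k:ℝ)) / Real.Gamma (s + k + 1)) (Real.exp x * γ) :=
    (hasSum_iff_tendsto_nat_of_nonneg hterm _).2 hS
  rw [hsum.tsum_eq, ← mul_assoc, ← Real.exp_add]
  simp

/-- The standard Gaussian probability measure on `ℝⁿ`, with density
`x ↦ π^(−n/2) · exp(−‖x‖²)` with respect to Lebesgue measure. -/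
noncomputable def stdGaussian (n : ℕ) : Measure (EuclideanSpace ℝ (Fin n)) :=
  volume.withDensity fun x =>
    ENNReal.ofReal ((Real.sqrt Real.pi ^ n)⁻¹ * Real.exp (-‖x‖ ^ 2))


lemma stdGaussian_ball_igamma (n : ℕ) (hn : 0 < n) (r : ℝ) (hr : 0 < r) :
    stdGaussian n (Metric.ball (0 : EuclideanSpace ℝ (Fin n)) r) =
      ENNReal.ofReal ((∫ u in (0:ℝ)..(r^2), u ^ ((n/2 : ℝ) - 1) * Real.exp (-u)) /
        Real.Gamma (n/2 : ℝ)) := by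
  haveI : Nonempty (Fin n) := ⟨⟨0, hn⟩⟩
  set E := EuclideanSpace ℝ (Fin n)
  set f : E → ℝ := fun x => (Real.sqrt Real.pi ^ n)⁻¹ * Real.exp (-‖x‖ ^ 2) with hf
  have hcont : Continuous f := by
    apply Continuous.mul continuous_const
    exact Real.continuous_exp.comp ((continuous_norm.pow 2).neg)
  have hint : IntegrableOn f (Metric.ball (0:E) r) volume :=
    (hcont.continuousOn.integrableOn_compact (isCompact_closedBall (0:E) r)).mono_set
      Metric.ball_subset_closedBall
  have h1 : stdGaussian n (Metric.ball (0:E) r) =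
      ENNReal.ofReal (∫ x in Metric.ball (0:E) r, f x) := by
    rw [stdGaussian, withDensity_apply _ measurableSet_ball,
      ofReal_integral_eq_lintegral_ofReal hint]
    filter_upwards with x
    positivity
  rw [h1]
  congr 1
  rw [hf]
  simp only []
  rw [MeasureTheory.integral_const_mul]
  set g : ℝ → ℝ := Set.indicator (Set.Iio r) (fun y => Real.exp (-y ^ 2)) with hg
  have h2 : ∫ x in Metric.ball (0:E) r, Real.exp (-‖x‖ ^ 2) = ∫ x : E, g ‖x‖ := by
    rw [← MeasureTheory.integral_indicator measurableSet_ball]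
    congr 1
    ext x
    by_cases h : ‖x‖ < r <;>
      simp [hg, Set.indicator_apply, mem_ball_zero_iff, Set.mem_Iio, h]
  rw [h2, integral_fun_norm_addHaar (volume : Measure E) g]
  rw [finrank_euclideanSpace_fin]
  set s : ℝ := (n/2 : ℝ) with hs
  have hs0 : 0 < s := by positivity
  set h : ℝ → ℝ := Set.indicator (Set.Iio (r^2))
      (fun u => (1/2) * (u ^ (s - 1) * Real.exp (-u))) with hh
  have h3 : ∫ y in Ioi (0:ℝ), y ^ (n-1) • g y
      = ∫ y in Ioi (0:ℝ), ((2:ℝ) * y ^ ((2:ℝ) - 1)) • h (y ^ (2:ℝ)) := by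
    apply setIntegral_congr_fun measurableSet_Ioi
    intro y hy
    dsimp only
    have hy0 : (0:ℝ) < y := hy
    have hyr : y ^ (2:ℝ) = y ^ (2:ℕ) := Real.rpow_two y
    have hlt : y ^ (2:ℝ) < r ^ 2 ↔ y < r := by
      rw [hyr]
      exact pow_lt_pow_iff_left₀ hy0.le hr.le (by norm_num)
    by_cases hc : y < r
    · have hmem : y ^ (2:ℝ) ∈ Set.Iio (r^2) := by rw [Set.mem_Iio, hlt]; exact hc
      rw [hg, hh]
      simp only [Set.indicator_of_mem hmem, Set.indicator_of_mem (Set.mem_Iio.mpr hc),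
        smul_eq_mul]
      have e2 : (y ^ (2:ℝ)) ^ (s - 1) = y ^ ((n:ℝ) - 2) := by
        rw [← Real.rpow_mul hy0.le]
        congr 1
        rw [hs]; ring
      have e3 : (y:ℝ) ^ (n-1:ℕ) = y ^ ((n:ℝ) - 2) * y := by
        rw [← Real.rpow_natCast y (n-1), Nat.cast_sub hn,
          show (n:ℝ) - (1:ℕ) = ((n:ℝ) - 2) + 1 by push_cast; ring,
          Real.rpow_add hy0, Real.rpow_one]
      rw [e2, e3, hyr]
      have e4 : ((2:ℝ)) - 1 = 1 := by norm_num
      rw [e4, Real.rpow_one]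
      ring
    · have hmem : y ^ (2:ℝ) ∉ Set.Iio (r^2) := by rw [Set.mem_Iio, hlt]; exact hc
      rw [hg, hh, Set.indicator_of_notMem hmem,
        Set.indicator_of_notMem (by simpa using hc)]
      simp
  rw [h3, integral_comp_rpow_Ioi_of_pos (by norm_num : (0:ℝ) < 2)]
  rw [hh, MeasureTheory.setIntegral_indicator measurableSet_Iio, Set.Ioi_inter_Iio,
    ← MeasureTheory.integral_Ioc_eq_integral_Ioo,
    ← intervalIntegral.integral_of_le (by positivity : (0:ℝ) ≤ r^2),
    intervalIntegral.integral_const_mul]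
  rw [show Metric.ball (0:E) 1 = Metric.ball ((0:EuclideanSpace ℝ (Fin n))) 1 from rfl,
    measureReal_def, EuclideanSpace.volume_ball]
  rw [Fintype.card_fin]
  have hΓpos : 0 < Real.Gamma s := Real.Gamma_pos_of_pos hs0
  have hΓ1 : Real.Gamma (s + 1) = s * Real.Gamma s := Real.Gamma_add_one hs0.ne'
  have hsp : (0:ℝ) < Real.sqrt Real.pi ^ n := by positivity
  have hvol : ((ENNReal.ofReal 1) ^ n *
      ENNReal.ofReal (Real.sqrt Real.pi ^ n / Real.Gamma ((n:ℝ)/2 + 1))).toReal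
      = Real.sqrt Real.pi ^ n / Real.Gamma (s + 1) := by
    rw [ENNReal.ofReal_one, one_pow, one_mul, ENNReal.toReal_ofReal (by positivity)]
  rw [hvol, nsmul_eq_mul, smul_eq_mul, hΓ1]
  have hn' : (0:ℝ) < n := by exact_mod_cast hn
  have h2s : (n:ℝ) = 2 * s := by rw [hs]; ring
  field_simp
  ring_nf
  rw [h2s]
  ring


/-- The standard Gaussian measure of the open ball of radius `r > 0` in `ℝⁿ`:
if `n = 2m` it equals `e^{−r²} ∑_{k≥m} r^{2k}/k!`, and if `n = 2m+1` it equals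
`e^{−r²} ∑_{k≥m+1} r^{2k−1}/Γ(k+1/2)`. -/
theorem stdGaussian_ball (n : ℕ) (r : ℝ) (hr : 0 < r) :
    (∀ m : ℕ, n = 2 * m →
      stdGaussian n (Metric.ball (0 : EuclideanSpace ℝ (Fin n)) r) =
        ENNReal.ofReal (Real.exp (-r ^ 2) *
          ∑' k : ℕ, r ^ (2 * (m + k)) / (Nat.factorial (m + k) : ℝ))) ∧
    (∀ m : ℕ, n = 2 * m + 1 →
      stdGaussian n (Metric.ball (0 : EuclideanSpace ℝ (Fin n)) r) =
        ENNReal.ofReal (Real.exp (-r ^ 2) *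
          ∑' k : ℕ, r ^ (2 * (m + 1 + k) - 1) / Real.Gamma ((m + 1 + k : ℝ) + 1 / 2))) := by
  constructor
  · intro m hm
    subst hm
    rcases Nat.eq_zero_or_pos m with rfl | hm1
    · -- n = 0 case
      haveI : Subsingleton (EuclideanSpace ℝ (Fin (2*0))) :=
        inferInstanceAs (Subsingleton (EuclideanSpace ℝ (Fin 0)))
      have hball : Metric.ball (0 : EuclideanSpace ℝ (Fin (2*0))) r = Set.univ := by
        ext x
        have hx0 : x = 0 := Subsingleton.elim x 0
        simp [mem_ball_zero_iff, hx0, hr]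
      have hdens : (fun x : EuclideanSpace ℝ (Fin (2*0)) =>
          ENNReal.ofReal ((Real.sqrt Real.pi ^ (2*0))⁻¹ * Real.exp (-‖x‖ ^ 2)))
          = fun _ => 1 := by
        funext x
        rw [Subsingleton.elim x 0]
        norm_num
      have hmeas : stdGaussian (2*0) (Metric.ball (0 : EuclideanSpace ℝ (Fin (2*0))) r)
          = 1 := by
        rw [stdGaussian, hdens,
          show (fun _ : EuclideanSpace ℝ (Fin (2*0)) => (1:ENNReal))
            = (1 : EuclideanSpace ℝ (Fin (2*0)) → ENNReal) from rfl,
          withDensity_one, hball]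
        have h := (EuclideanSpace.volume_preserving_symm_measurableEquiv_toLp
          (Fin (2*0))).measure_preimage MeasurableSet.univ.nullMeasurableSet
        simpa [MeasureTheory.volume_pi, Measure.pi_univ] using h
      rw [hmeas]
      have hsum : ∑' k : ℕ, r ^ (2 * (0 + k)) / (Nat.factorial (0 + k) : ℝ)
          = Real.exp (r^2) := by
        rw [Real.exp_eq_exp_ℝ, NormedSpace.exp_eq_tsum_div]
        apply tsum_congr
        intro k
        simp [pow_mul]
      rw [hsum, ← Real.exp_add]
      norm_num
    · have hn : 0 < 2*m := by omega
      rw [stdGaussian_ball_igamma (2*m) hn r hr]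
      have hs0 : (0:ℝ) < ((2*m : ℕ):ℝ)/2 := by
        have : (0:ℝ) < ((2*m : ℕ):ℝ) := by exact_mod_cast hn
        linarith
      rw [igamma_series _ _ hs0 (by positivity : (0:ℝ) < r^2)]
      congr 1
      congr 1
      apply tsum_congr
      intro k
      have hsm : ((2*m:ℕ):ℝ)/2 = (m:ℝ) := by push_cast; ring
      rw [hsm]
      rw [show ((m:ℝ)+(k:ℝ)) = ((m+k:ℕ):ℝ) by push_cast; ring,
        Real.rpow_natCast, ← pow_mul, Real.Gamma_nat_eq_factorial]
  · intro m hm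
    subst hm
    rw [stdGaussian_ball_igamma (2*m+1) (by omega) r hr]
    have hs0 : (0:ℝ) < ((2*m+1 : ℕ):ℝ)/2 := by positivity
    rw [igamma_series _ _ hs0 (by positivity : (0:ℝ) < r^2)]
    congr 1
    congr 1
    apply tsum_congr
    intro k
    rw [show (2*(m+1+k)-1:ℕ) = 2*(m+k)+1 from by omega]
    have h1 : (r^2 : ℝ) ^ (((2*m+1 : ℕ):ℝ)/2 + (k:ℝ)) = r ^ (2*(m+k)+1 : ℕ) := by
      rw [← Real.rpow_natCast r (2*(m+k)+1), ← Real.rpow_two, ← Real.rpow_mul hr.le]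
      congr 1
      push_cast
      ring
    rw [h1]
    congr 2
    push_cast
    ring
end

section
/- For every r > 0, the standard Gaussian measure of the ball of radius r tends to zero as the dimension tends to infinity: if ν⁽ⁿ⁾ denotes the probability measure on ℝⁿ with density x ↦ π^{−n/2}·exp(−‖x‖²) with respect to Lebesgue measure, and B_rⁿ(0) ⊆ ℝⁿ is the open Euclidean ball of radius r centered at 0, then lim_{n→∞} ν⁽ⁿ⁾(B_rⁿ(0)) = 0. (This is the key step in the paper's proof that an infinite-dimensional Hilbert space has measure zero inside the projective-limit Gaussian measure space.) -/
open MeasureTheory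

lemma aux_tendsto (r : ℝ) (hr : 0 < r) :
    Filter.Tendsto (fun n : ℕ => r ^ n / Real.Gamma ((n : ℝ) / 2 + 1))
      Filter.atTop (nhds 0) := by
  set R : ℝ := max r 1 with hR
  have hR1 : 1 ≤ R := le_max_right _ _
  have hrR : r ≤ R := le_max_left _ _
  have hdiv : Filter.Tendsto (fun n : ℕ => n / 2) Filter.atTop Filter.atTop :=
    Filter.tendsto_atTop_atTop.mpr fun b => ⟨2 * b, fun a ha => by omega⟩
  have h1 : Filter.Tendsto (fun k : ℕ => (R ^ 2) ^ k / (k.factorial : ℝ))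
      Filter.atTop (nhds 0) := FloorSemiring.tendsto_pow_div_factorial_atTop (R ^ 2)
  have hb : Filter.Tendsto (fun n : ℕ => R * ((R ^ 2) ^ (n / 2) / ((n / 2).factorial : ℝ)))
      Filter.atTop (nhds 0) := by
    have := (h1.comp hdiv).const_mul R
    simpa using this
  apply squeeze_zero'
  · filter_upwards with n
    have hΓ : 0 < Real.Gamma ((n : ℝ) / 2 + 1) :=
      Real.Gamma_pos_of_pos (by positivity)
    positivity
  · filter_upwards [Filter.eventually_ge_atTop 2] with n hn
    set k := n / 2 with hk
    have hk1 : 1 ≤ k := by omega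
    have hkn : 2 * k ≤ n := by omega
    have hnk : n ≤ 2 * k + 1 := by omega
    have hcast : (k : ℝ) + 1 ≤ (n : ℝ) / 2 + 1 := by
      have : (2 * k : ℝ) ≤ (n : ℝ) := by exact_mod_cast hkn
      linarith
    have hmem1 : ((k : ℝ) + 1) ∈ Set.Ici (2 : ℝ) := by
      simp only [Set.mem_Ici]
      have : (1 : ℝ) ≤ (k : ℝ) := by exact_mod_cast hk1
      linarith
    have hmem2 : ((n : ℝ) / 2 + 1) ∈ Set.Ici (2 : ℝ) := le_trans hmem1 hcast
    have hΓle : (k.factorial : ℝ) ≤ Real.Gamma ((n : ℝ) / 2 + 1) := by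
      have := Real.Gamma_strictMonoOn_Ici.monotoneOn hmem1 hmem2 hcast
      rwa [Real.Gamma_nat_eq_factorial] at this
    have hfac : (0 : ℝ) < (k.factorial : ℝ) := by exact_mod_cast k.factorial_pos
    have hnum : r ^ n ≤ R ^ (2 * k + 1) :=
      le_trans (pow_le_pow_left₀ hr.le hrR n) (pow_le_pow_right₀ hR1 hnk)
    have hpow : R ^ (2 * k + 1) = R * (R ^ 2) ^ k := by
      rw [← pow_mul]; ring
    calc r ^ n / Real.Gamma ((n : ℝ) / 2 + 1)
        ≤ R ^ (2 * k + 1) / (k.factorial : ℝ) :=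
          div_le_div₀ (by positivity) hnum hfac hΓle
      _ = R * ((R ^ 2) ^ k / (k.factorial : ℝ)) := by rw [hpow, mul_div_assoc]
  · exact hb

/-- For every fixed `r > 0`, the standard Gaussian measure of the open ball of radius `r`
in `ℝⁿ` tends to zero as the dimension `n` tends to infinity. -/
theorem stdGaussian_ball_tendsto_zero (r : ℝ) (hr : 0 < r) :
    Filter.Tendsto (fun n : ℕ => stdGaussian n (Metric.ball (0 : EuclideanSpace ℝ (Fin n)) r))
      Filter.atTop (nhds 0) := by
  have hub : Filter.Tendsto (fun n : ℕ => ENNReal.ofReal (r ^ n / Real.Gamma ((n : ℝ) / 2 + 1)))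
      Filter.atTop (nhds 0) := by
    have := ENNReal.tendsto_ofReal (aux_tendsto r hr)
    simpa using this
  apply tendsto_of_tendsto_of_tendsto_of_le_of_le' tendsto_const_nhds hub
  · filter_upwards with n; exact zero_le
  · filter_upwards [Filter.eventually_ge_atTop 1] with n hn
    haveI : Nonempty (Fin n) := Fin.pos_iff_nonempty.mp hn
    have hπ : 0 < Real.sqrt Real.pi := Real.sqrt_pos.mpr Real.pi_pos
    have hΓ : 0 < Real.Gamma ((n : ℝ) / 2 + 1) := Real.Gamma_pos_of_pos (by positivity)
    rw [stdGaussian, withDensity_apply _ measurableSet_ball]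
    calc ∫⁻ x in Metric.ball (0 : EuclideanSpace ℝ (Fin n)) r,
            ENNReal.ofReal ((Real.sqrt Real.pi ^ n)⁻¹ * Real.exp (-‖x‖ ^ 2))
        ≤ ∫⁻ _ in Metric.ball (0 : EuclideanSpace ℝ (Fin n)) r,
            ENNReal.ofReal ((Real.sqrt Real.pi ^ n)⁻¹) := by
          apply setLIntegral_mono measurable_const
          intro x _
          apply ENNReal.ofReal_le_ofReal
          apply mul_le_of_le_one_right (by positivity)
          exact Real.exp_le_one_iff.mpr (neg_nonpos.mpr (by positivity))
      _ = ENNReal.ofReal ((Real.sqrt Real.pi ^ n)⁻¹) *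
            volume (Metric.ball (0 : EuclideanSpace ℝ (Fin n)) r) := setLIntegral_const _ _
      _ = ENNReal.ofReal (r ^ n / Real.Gamma ((n : ℝ) / 2 + 1)) := by
          rw [EuclideanSpace.volume_ball, Fintype.card_fin,
            ← ENNReal.ofReal_pow hr.le, ← ENNReal.ofReal_mul (by positivity),
            ← ENNReal.ofReal_mul (by positivity)]
          congr 1
          field_simp
end

section
/- Inner product of coherent states: let Q be a positive definite hermitian n×n matrix. For all x, y ∈ ℂⁿ, the function z ↦ conj(K_x(z))·K_y(z) = exp((z,x)_Q + (y,z)_Q) is ν_Q-integrable and ∫_{ℂⁿ} conj(K_x(z))·K_y(z)·dν_Q(z) = exp((y,x)_Q). In particular, ∫_{ℂⁿ} |K_x(z)|² dν_Q(z) = exp((x,x)_Q). -/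
open MeasureTheory ComplexOrder
open Complex Real
open scoped ComplexConjugate

noncomputable section

/-- The sesquilinear form `(u,v)_Q := ∑_{i,j} conj(uᵢ) Q_{ij} vⱼ` on `ℂⁿ`. -/
noncomputable def innerQC {n : ℕ} (Q : Matrix (Fin n) (Fin n) ℂ) (u v : Fin n → ℂ) : ℂ :=
  ∑ i, ∑ j, (starRingEnd ℂ) (u i) * Q i j * v j

/-- The Gaussian measure `ν_Q` on `ℂⁿ` associated to a positive definite hermitian
matrix `Q`, with density `z ↦ (det Q / πⁿ)·exp(−(z,z)_Q)` with respect to Lebesgue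
measure on `ℂⁿ ≅ ℝ²ⁿ`. -/
noncomputable def gaussianMeasureC {n : ℕ} (Q : Matrix (Fin n) (Fin n) ℂ) :
    Measure (Fin n → ℂ) :=
  volume.withDensity fun z =>
    ENNReal.ofReal ((Q.det.re / Real.pi ^ n) * Real.exp (-(innerQC Q z z).re))

/-- The coherent state associated to `x ∈ ℂⁿ`: `K_x(z) := exp((x,z)_Q)`. -/
noncomputable def coherent {n : ℕ} (Q : Matrix (Fin n) (Fin n) ℂ) (x z : Fin n → ℂ) : ℂ :=
  Complex.exp (innerQC Q x z)

lemma gauss1d_integrand_eq (d : ℝ) (a c : ℂ) (p : ℝ × ℝ) :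
    Complex.exp (-(d:ℂ) * Complex.normSq (Complex.measurableEquivRealProd.symm p)
      + a * conj (Complex.measurableEquivRealProd.symm p)
      + c * (Complex.measurableEquivRealProd.symm p)) =
    Complex.exp (-(d:ℂ) * (p.1:ℂ)^2 + (a + c) * p.1 + 0)
      * Complex.exp (-(d:ℂ) * (p.2:ℂ)^2 + ((c - a) * Complex.I) * p.2 + 0) := by
  rw [← Complex.exp_add]
  congr 1
  have h : (Complex.measurableEquivRealProd.symm p) = Complex.mk p.1 p.2 := rfl
  rw [h]
  have h2 : (Complex.mk p.1 p.2) = (p.1 : ℂ) + (p.2 : ℂ) * Complex.I := by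
    simp [Complex.ext_iff]
  have h3 : conj (Complex.mk p.1 p.2) = (p.1 : ℂ) - (p.2 : ℂ) * Complex.I := by
    simp [Complex.ext_iff]
  have h4 : (Complex.normSq (Complex.mk p.1 p.2) : ℂ) = (p.1:ℂ)^2 + (p.2:ℂ)^2 := by
    simp [Complex.normSq_mk]; push_cast; ring
  rw [h4, h3, h2]
  ring

lemma gauss1d_integrable {d : ℝ} (hd : 0 < d) (a c : ℂ) :
    Integrable (fun z : ℂ => Complex.exp (-(d:ℂ) * Complex.normSq z + a * conj z + c * z)) := by
  rw [← (Complex.volume_preserving_equiv_real_prod.symm).integrable_comp_emb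
    (Complex.measurableEquivRealProd.symm.measurableEmbedding)]
  have : ((fun z : ℂ => Complex.exp (-(d:ℂ) * Complex.normSq z + a * conj z + c * z)) ∘
      Complex.measurableEquivRealProd.symm) =
      fun p : ℝ × ℝ => Complex.exp (-(d:ℂ) * (p.1:ℂ)^2 + (a + c) * p.1 + 0)
        * Complex.exp (-(d:ℂ) * (p.2:ℂ)^2 + ((c - a) * Complex.I) * p.2 + 0) := by
    funext p; exact gauss1d_integrand_eq d a c p
  rw [this, MeasureTheory.Measure.volume_eq_prod]
  exact (integrable_cexp_quadratic (b := (d:ℂ)) (by simpa using hd) (a+c) 0).mul_prod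
    (integrable_cexp_quadratic (b := (d:ℂ)) (by simpa using hd) ((c-a)*Complex.I) 0)

lemma gauss1d_integral {d : ℝ} (hd : 0 < d) (a c : ℂ) :
    ∫ z : ℂ, Complex.exp (-(d:ℂ) * Complex.normSq z + a * conj z + c * z)
      = (Real.pi / d : ℝ) * Complex.exp (a * c / d) := by
  rw [← (Complex.volume_preserving_equiv_real_prod.symm).integral_comp
    (Complex.measurableEquivRealProd.symm.measurableEmbedding)]
  simp_rw [gauss1d_integrand_eq d a c]
  rw [MeasureTheory.Measure.volume_eq_prod, integral_prod_mul (f := fun s : ℝ => Complex.exp (-(d:ℂ) * (s:ℂ)^2 + (a + c) * s + 0)) (g := fun t : ℝ => Complex.exp (-(d:ℂ) * (t:ℂ)^2 + ((c - a) * Complex.I) * t + 0))]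
  have hd' : (-(d:ℂ)).re < 0 := by simpa using hd
  rw [integral_cexp_quadratic hd' (a+c) 0, integral_cexp_quadratic hd' ((c-a)*Complex.I) 0]
  have hne : (↑Real.pi / -(-(d:ℂ))) ≠ 0 := by
    simp [Complex.ext_iff, Real.pi_ne_zero, ne_of_gt hd, div_eq_mul_inv]
  have key : (↑Real.pi / -(-(d:ℂ))) ^ (1/2 : ℂ) * (↑Real.pi / -(-(d:ℂ))) ^ (1/2 : ℂ)
      = (Real.pi / d : ℝ) := by
    rw [← Complex.cpow_add _ _ hne]
    norm_num
  calc ((↑Real.pi / -(-(d:ℂ))) ^ (1/2:ℂ) * Complex.exp (0 - (a+c)^2 / (4 * -(d:ℂ))))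
        * ((↑Real.pi / -(-(d:ℂ))) ^ (1/2:ℂ) * Complex.exp (0 - ((c-a)*Complex.I)^2 / (4 * -(d:ℂ))))
      = ((↑Real.pi / -(-(d:ℂ))) ^ (1/2:ℂ) * (↑Real.pi / -(-(d:ℂ))) ^ (1/2:ℂ))
        * Complex.exp ((0 - (a+c)^2 / (4 * -(d:ℂ))) + (0 - ((c-a)*Complex.I)^2 / (4 * -(d:ℂ)))) := by
        rw [Complex.exp_add]; ring
    _ = (Real.pi / d : ℝ) * Complex.exp (a * c / d) := by
        rw [key]
        congr 1
        have hdne : (d:ℂ) ≠ 0 := by exact_mod_cast ne_of_gt hd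
        field_simp
        ring_nf
        simp [Complex.I_sq]
        ring

lemma gaussN_eq_prod {n : ℕ} (d : Fin n → ℝ) (a c : Fin n → ℂ) (z : Fin n → ℂ) :
    Complex.exp (∑ i, (-(d i : ℂ) * Complex.normSq (z i) + a i * conj (z i) + c i * z i))
      = ∏ i, Complex.exp (-(d i : ℂ) * Complex.normSq (z i) + a i * conj (z i) + c i * z i) :=
  Complex.exp_sum _ _

lemma gaussN_integrable {n : ℕ} {d : Fin n → ℝ} (hd : ∀ i, 0 < d i) (a c : Fin n → ℂ) :
    Integrable (fun z : Fin n → ℂ =>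
      Complex.exp (∑ i, (-(d i : ℂ) * Complex.normSq (z i) + a i * conj (z i) + c i * z i))) := by
  simp_rw [gaussN_eq_prod]
  exact Integrable.fintype_prod (f := fun i (w : ℂ) =>
    Complex.exp (-(d i : ℂ) * Complex.normSq w + a i * conj w + c i * w))
    (fun i => gauss1d_integrable (hd i) (a i) (c i))

lemma gaussN_integral {n : ℕ} {d : Fin n → ℝ} (hd : ∀ i, 0 < d i) (a c : Fin n → ℂ) :
    ∫ z : Fin n → ℂ,
      Complex.exp (∑ i, (-(d i : ℂ) * Complex.normSq (z i) + a i * conj (z i) + c i * z i))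
      = (∏ i, ((Real.pi / d i : ℝ) : ℂ)) * Complex.exp (∑ i, a i * c i / d i) := by
  simp_rw [gaussN_eq_prod]
  rw [integral_fintype_prod_volume_eq_prod (f := fun i (w : ℂ) =>
    Complex.exp (-(d i : ℂ) * Complex.normSq w + a i * conj w + c i * w))]
  simp_rw [fun i => gauss1d_integral (hd i) (a i) (c i)]
  rw [Finset.prod_mul_distrib, ← Complex.exp_sum]

lemma sum_normSq_eq_dot {n : ℕ} (v : Fin n → ℂ) :
    ∑ i, (Complex.normSq (v i) : ℂ) = dotProduct (star v) v := by
  simp [dotProduct, Complex.normSq_eq_conj_mul_self]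

lemma sum_normSq_mulVec {n : ℕ} {U : Matrix (Fin n) (Fin n) ℂ} (h1 : star U * U = 1)
    (z : Fin n → ℂ) :
    ∑ i, (Complex.normSq ((U.mulVec z) i) : ℂ) = ∑ i, (Complex.normSq (z i) : ℂ) := by
  rw [sum_normSq_eq_dot, sum_normSq_eq_dot, Matrix.star_mulVec, Matrix.dotProduct_mulVec,
    Matrix.vecMul_vecMul]
  rw [Matrix.star_eq_conjTranspose] at h1
  rw [h1, Matrix.vecMul_one]

lemma unitary_measurePreserving {n : ℕ} {U : Matrix (Fin n) (Fin n) ℂ}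
    (h1 : star U * U = 1) (h2 : U * star U = 1) :
    ∃ em : (Fin n → ℂ) ≃ᵐ (Fin n → ℂ), ⇑em = (fun z : Fin n → ℂ => U.mulVec z) ∧
      MeasurePreserving (⇑em) volume volume := by
  classical
  let e₀ : (Fin n → ℂ) ≃ₗ[ℂ] (Fin n → ℂ) :=
    LinearEquiv.ofLinear (Matrix.toLin' U) (Matrix.toLin' (star U))
      (by rw [← Matrix.toLin'_mul, h2, Matrix.toLin'_one])
      (by rw [← Matrix.toLin'_mul, h1, Matrix.toLin'_one])
  let e : (Fin n → ℂ) ≃L[ℂ] (Fin n → ℂ) := e₀.toContinuousLinearEquiv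
  have he : ⇑e = fun z => U.mulVec z := by
    funext z
    show e₀ z = U.mulVec z
    simp [e₀, Matrix.toLin'_apply]
  let e' : (Fin n → ℂ) ≃ᵐ (Fin n → ℂ) := e.toHomeomorph.toMeasurableEquiv
  have he' : ⇑e' = fun z => U.mulVec z := he
  have hmeas : Measurable (fun z : Fin n → ℂ => U.mulVec z) := by
    rw [← he]; exact e.continuous.measurable
  set μ' := volume.map (⇑e') with hμ'
  haveI : μ'.IsAddHaarMeasure := e.isAddHaarMeasure_map volume
  have hc : μ' = (Measure.addHaarScalarFactor μ' volume) • volume :=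
    Measure.isAddLeftInvariant_eq_smul μ' volume
  set c := Measure.addHaarScalarFactor μ' volume with hcdef
  set F : (Fin n → ℂ) → ℂ := fun z =>
    Complex.exp (∑ i, (-((1:ℝ) : ℂ) * Complex.normSq (z i) + 0 * conj (z i) + 0 * z i)) with hF
  have hFval : ∫ z, F z = ((Real.pi : ℂ)) ^ n := by
    have h0 := gaussN_integral (n := n) (fun _ => one_pos) 0 0
    simp only [Pi.zero_apply] at h0
    rw [hF]
    simpa using h0
  have hcomp : ∀ z, F (U.mulVec z) = F z := by
    intro z
    simp only [hF, zero_mul, add_zero]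
    congr 1
    simp only [neg_mul, Complex.ofReal_one, one_mul]
    rw [Finset.sum_neg_distrib, Finset.sum_neg_distrib]
    exact congrArg Neg.neg (sum_normSq_mulVec h1 z)
  have hmi : ∫ z, F z ∂μ' = ∫ z, F z := by
    rw [hμ', integral_map_equiv]
    simp_rw [he', hcomp]
  have hsm : ∫ z, F z ∂μ' = (c : ℝ) • ∫ z, F z := by
    rw [hc, integral_smul_nnreal_measure]
    rfl
  have hπ : ((Real.pi : ℂ)) ^ n ≠ 0 := pow_ne_zero _ (by exact_mod_cast Real.pi_ne_zero)
  have hc1 : (c : ℝ) = 1 := by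
    have := hmi.symm.trans hsm
    rw [hFval] at this
    have h2' : ((c:ℝ):ℂ) * (Real.pi:ℂ)^n = 1 * (Real.pi:ℂ)^n := by
      rw [one_mul]
      simpa [smul_eq_mul] using this.symm
    have := mul_right_cancel₀ hπ h2'
    exact_mod_cast this
  have hcone : c = 1 := by
    ext
    exact_mod_cast hc1
  have hmapvol : μ' = volume := by rw [hc, hcone, one_smul]
  refine ⟨e', he', hmeas.comp measurable_id, ?_⟩
  rw [← hμ', hmapvol]



lemma innerQC_conj {n : ℕ} {Q : Matrix (Fin n) (Fin n) ℂ} (hH : Q.IsHermitian)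
    (u v : Fin n → ℂ) : conj (innerQC Q u v) = innerQC Q v u := by
  have hQc : ∀ i j, conj (Q i j) = Q j i := by
    intro i j
    have := congrFun (congrFun hH j) i
    simpa [Matrix.conjTranspose_apply] using this
  unfold innerQC
  simp only [map_sum, map_mul, Complex.conj_conj]
  rw [Finset.sum_comm]
  refine Finset.sum_congr rfl fun j _ => Finset.sum_congr rfl fun i _ => ?_
  rw [hQc]
  ring

lemma innerQC_self_re {n : ℕ} {Q : Matrix (Fin n) (Fin n) ℂ} (hH : Q.IsHermitian)
    (z : Fin n → ℂ) : ((innerQC Q z z).re : ℂ) = innerQC Q z z :=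
  Complex.conj_eq_iff_re.mp (innerQC_conj hH z z)

lemma innerQC_diag {n : ℕ} {Q U : Matrix (Fin n) (Fin n) ℂ} {d : Fin n → ℝ}
    (hspec : Q = U * Matrix.diagonal (fun i => (d i : ℂ)) * star U) (u v : Fin n → ℂ) :
    innerQC Q u v
      = ∑ i, (d i : ℂ) * conj (((star U).mulVec u) i) * (((star U).mulVec v) i) := by
  have h0 : innerQC Q u v = dotProduct (star u) (Q.mulVec v) := by
    simp [innerQC, dotProduct, Matrix.mulVec, Finset.mul_sum, mul_assoc]
  have hsu : Matrix.vecMul (star u) U = star ((star U).mulVec u) := by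
    rw [Matrix.star_mulVec]
    rw [Matrix.star_eq_conjTranspose, Matrix.conjTranspose_conjTranspose]
  rw [h0, hspec, ← Matrix.mulVec_mulVec, ← Matrix.mulVec_mulVec, Matrix.dotProduct_mulVec, hsu]
  simp only [dotProduct, Matrix.mulVec_diagonal, Pi.star_apply, RCLike.star_def]
  refine Finset.sum_congr rfl fun i _ => by ring


set_option maxHeartbeats 1000000 in
lemma coherent_inner_aux {n : ℕ} (Q : Matrix (Fin n) (Fin n) ℂ) (hQ : Q.PosDef)
    (x y : Fin n → ℂ) :
    Integrable (fun z => (starRingEnd ℂ) (coherent Q x z) * coherent Q y z)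
        (gaussianMeasureC Q) ∧
    (∫ z, (starRingEnd ℂ) (coherent Q x z) * coherent Q y z ∂(gaussianMeasureC Q)
        = Complex.exp (innerQC Q y x)) := by
  classical
  have hH : Q.IsHermitian := hQ.1
  obtain ⟨U, d, hd, h2, h1, hspec, hdet⟩ : ∃ (U : Matrix (Fin n) (Fin n) ℂ) (d : Fin n → ℝ),
      (∀ i, 0 < d i) ∧ U * star U = 1 ∧ star U * U = 1 ∧
      Q = U * Matrix.diagonal (fun i => (d i : ℂ)) * star U ∧ Q.det.re = ∏ i, d i := by
    refine ⟨hH.eigenvectorUnitary, hH.eigenvalues, fun i => hQ.eigenvalues_pos i,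
      Matrix.mem_unitaryGroup_iff.mp hH.eigenvectorUnitary.2,
      Matrix.mem_unitaryGroup_iff'.mp hH.eigenvectorUnitary.2, ?_, ?_⟩
    · have h := hH.spectral_theorem
      rwa [show (RCLike.ofReal ∘ hH.eigenvalues : Fin n → ℂ)
        = fun i => ((hH.eigenvalues i : ℝ) : ℂ) from rfl] at h
    · rw [hH.det_eq_prod_eigenvalues]
      norm_cast
  obtain ⟨em, hem, hm⟩ := unitary_measurePreserving h1 h2
  set a : Fin n → ℂ := (star U).mulVec x with hadef
  set b : Fin n → ℂ := (star U).mulVec y with hbdef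
  set A : Fin n → ℂ := fun i => (d i : ℂ) * a i with hAdef
  set Cc : Fin n → ℂ := fun i => (d i : ℂ) * conj (b i) with hCcdef
  set Cr : ℝ := Q.det.re / Real.pi ^ n with hCrdef
  set G : (Fin n → ℂ) → ℂ :=
    fun z => Complex.exp (-(innerQC Q z z) + innerQC Q z x + innerQC Q y z) with hGdef
  set ρ : (Fin n → ℂ) → ℝ := fun z => Cr * Real.exp (-(innerQC Q z z).re) with hρdef
  have hsUU : ∀ w : Fin n → ℂ, (star U).mulVec (U.mulVec w) = w := by
    intro w
    rw [Matrix.mulVec_mulVec, h1, Matrix.one_mulVec]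
  have hprodd : 0 < ∏ i, d i := Finset.prod_pos (fun i _ => hd i)
  have hCrpos : 0 < Cr := by
    rw [hCrdef, hdet]
    positivity
  have hρnn : ∀ z, 0 ≤ ρ z := fun z => mul_nonneg hCrpos.le (Real.exp_nonneg _)
  have hGU : ∀ w : Fin n → ℂ, G (U.mulVec w)
      = Complex.exp (∑ i, (-(d i : ℂ) * Complex.normSq (w i) + A i * conj (w i) + Cc i * w i)) := by
    intro w
    refine congrArg Complex.exp ?_
    rw [innerQC_diag hspec (U.mulVec w) (U.mulVec w), innerQC_diag hspec (U.mulVec w) x,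
      innerQC_diag hspec y (U.mulVec w), hsUU]
    rw [← hadef, ← hbdef]
    rw [← Finset.sum_neg_distrib, ← Finset.sum_add_distrib, ← Finset.sum_add_distrib]
    refine Finset.sum_congr rfl fun i _ => ?_
    rw [show ((Complex.normSq (w i) : ℝ) : ℂ) = conj (w i) * w i from
      Complex.normSq_eq_conj_mul_self]
    simp only [hAdef, hCcdef]
    ring
  have hGint : Integrable G volume := by
    rw [← hm.integrable_comp_emb em.measurableEmbedding]
    have heq : (G ∘ ⇑em) = fun w : Fin n → ℂ =>
        Complex.exp (∑ i, (-(d i : ℂ) * Complex.normSq (w i) + A i * conj (w i) + Cc i * w i)) := by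
      funext w
      rw [Function.comp_apply, hem]
      exact hGU w
    rw [heq]
    exact gaussN_integrable hd A Cc
  have hGval : ∫ z, G z = (∏ i, ((Real.pi / d i : ℝ) : ℂ)) * Complex.exp (innerQC Q y x) := by
    rw [← hm.integral_comp em.measurableEmbedding G]
    have heq : ∀ w : Fin n → ℂ, G (em w)
        = Complex.exp (∑ i, (-(d i : ℂ) * Complex.normSq (w i) + A i * conj (w i) + Cc i * w i)) := by
      intro w; rw [hem]; exact hGU w
    simp_rw [heq]
    rw [gaussN_integral hd A Cc]
    congr 2
    rw [innerQC_diag hspec y x, ← hadef, ← hbdef]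
    refine Finset.sum_congr rfl fun i _ => ?_
    have hdne : (d i : ℂ) ≠ 0 := by exact_mod_cast (hd i).ne'
    simp only [hAdef, hCcdef]
    field_simp
  set ρ' : (Fin n → ℂ) → NNReal := fun z => Real.toNNReal (ρ z) with hρ'def
  have hν : gaussianMeasureC Q = volume.withDensity (fun z => ((ρ' z : NNReal) : ENNReal)) := rfl
  have hcont : Continuous ρ := by
    rw [hρdef]
    have : Continuous fun z : Fin n → ℂ => innerQC Q z z := by
      unfold innerQC
      refine continuous_finset_sum _ fun i _ => continuous_finset_sum _ fun j _ => ?_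
      exact ((continuous_star.comp (continuous_apply i)).mul continuous_const).mul
        (continuous_apply j)
    fun_prop
  have hρ'meas : Measurable ρ' := measurable_real_toNNReal.comp hcont.measurable
  have hsmul_eq : (fun z => ρ' z • ((starRingEnd ℂ) (coherent Q x z) * coherent Q y z))
      = fun z => Cr • G z := by
    funext z
    rw [NNReal.smul_def, Real.coe_toNNReal _ (hρnn z)]
    show ρ z • _ = _
    have hf : (starRingEnd ℂ) (coherent Q x z) * coherent Q y z
        = Complex.exp (innerQC Q z x + innerQC Q y z) := by
      unfold coherent
      rw [← Complex.exp_conj, innerQC_conj hH, ← Complex.exp_add]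
    rw [hf, hρdef]
    rw [Complex.real_smul, Complex.real_smul, Complex.ofReal_mul, Complex.ofReal_exp,
      Complex.ofReal_neg, innerQC_self_re hH z, mul_assoc, ← Complex.exp_add]
    rw [hGdef]
    ring_nf
  have hCrG_int : Integrable (fun z => Cr • G z) volume := hGint.smul Cr
  have hint : Integrable (fun z => (starRingEnd ℂ) (coherent Q x z) * coherent Q y z)
      (gaussianMeasureC Q) := by
    rw [hν, integrable_withDensity_iff_integrable_smul hρ'meas, hsmul_eq]
    exact hCrG_int
  refine ⟨hint, ?_⟩
  have hconstR : Cr * (∏ i, (Real.pi / d i)) = 1 := by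
    rw [Finset.prod_div_distrib, Finset.prod_const, Finset.card_univ, Fintype.card_fin,
      hCrdef, hdet]
    field_simp
  have hconst : (Cr : ℂ) * (∏ i, ((Real.pi / d i : ℝ) : ℂ)) = 1 := by
    rw [show (∏ i, ((Real.pi / d i : ℝ) : ℂ)) = ((∏ i, (Real.pi / d i) : ℝ) : ℂ) by
      push_cast; rfl]
    rw [← Complex.ofReal_mul, hconstR, Complex.ofReal_one]
  rw [hν, integral_withDensity_eq_integral_smul hρ'meas, hsmul_eq, integral_smul, hGval,
    Complex.real_smul, ← mul_assoc, hconst, one_mul]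

/-- Inner product of coherent states: `z ↦ conj(K_x(z))·K_y(z)` is `ν_Q`-integrable,
`∫ conj(K_x)·K_y dν_Q = exp((y,x)_Q)`, and in particular
`∫ |K_x|² dν_Q = exp((x,x)_Q)`. -/
theorem coherent_inner {n : ℕ} (Q : Matrix (Fin n) (Fin n) ℂ) (hQ : Q.PosDef)
    (x y : Fin n → ℂ) :
    Integrable (fun z => (starRingEnd ℂ) (coherent Q x z) * coherent Q y z)
        (gaussianMeasureC Q) ∧
    (∫ z, (starRingEnd ℂ) (coherent Q x z) * coherent Q y z ∂(gaussianMeasureC Q)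
        = Complex.exp (innerQC Q y x)) ∧
    (∫ z, ‖coherent Q x z‖ ^ 2 ∂(gaussianMeasureC Q) = Real.exp ((innerQC Q x x).re)) := by
  obtain ⟨ha1, ha2⟩ := coherent_inner_aux Q hQ x y
  refine ⟨ha1, ha2, ?_⟩
  obtain ⟨hx1, hx2⟩ := coherent_inner_aux Q hQ x x
  have h3 : ∀ z, ‖coherent Q x z‖ ^ 2
      = ((starRingEnd ℂ) (coherent Q x z) * coherent Q x z).re := by
    intro z
    rw [show (starRingEnd ℂ) (coherent Q x z) * coherent Q x z
      = ((Complex.normSq (coherent Q x z) : ℝ) : ℂ) from (Complex.normSq_eq_conj_mul_self).symm]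
    rw [Complex.ofReal_re, ← Complex.sq_norm]
  simp_rw [h3]
  have := integral_re (𝕜 := ℂ) hx1
  simp only [RCLike.re_to_complex] at this
  rw [this, hx2]
  conv_lhs => rw [← innerQC_self_re hQ.1 x, ← Complex.ofReal_exp]
  exact Complex.ofReal_re _

end
end

section
/- Amplitude of a coherent state (finite-dimensional case): let H be a finite-dimensional complex inner product space with inner product ⟨·,·⟩ conjugate-linear in the first argument, set g := Re⟨·,·⟩, and let V ⊆ H be an ℝ-linear subspace such that Im⟨v,w⟩ = 0 for all v,w ∈ V and such that H = V ⊕ i·V (every element of H is uniquely a + i·b with a,b ∈ V). Let ν be the probability measure on V obtained by normalizing the measure exp(−(1/4)·g(φ,φ))·dμ(φ), where μ is any Haar (Lebesgue) measure on the real vector space V. Then for every ξ ∈ H, writing ξ = ξᴿ + i·ξᴵ with ξᴿ, ξᴵ ∈ V, the function φ ↦ exp((1/2)·⟨ξ,φ⟩) on V is ν-integrable and ∫_V exp((1/2)·⟨ξ,φ⟩) dν(φ) = exp((1/4)·g(ξᴿ,ξᴿ) − (1/4)·g(ξᴵ,ξᴵ) − (i/2)·g(ξᴿ,ξᴵ)).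 -/
open MeasureTheory

open Complex Real Module
open scoped ENNReal NNReal

local notation "⟪" x ", " y "⟫" => @inner ℝ _ _ x y

theorem gauss_two_eucl {ι : Type*} [Fintype ι] {b : ℂ} (hb : 0 < b.re) (c₁ c₂ : ℂ)
    (w₁ w₂ : EuclideanSpace ℝ ι) :
    ∫ v : EuclideanSpace ℝ ι, Complex.exp (-b * ‖v‖ ^ 2 + (c₁ * ⟪w₁, v⟫ + c₂ * ⟪w₂, v⟫)) =
      (π / b) ^ (Fintype.card ι / 2 : ℂ) *
        Complex.exp ((c₁ ^ 2 * ‖w₁‖ ^ 2 + 2 * c₁ * c₂ * ⟪w₁, w₂⟫ + c₂ ^ 2 * ‖w₂‖ ^ 2)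
          / (4 * b)) := by
  have := (EuclideanSpace.volume_preserving_symm_measurableEquiv_toLp ι).symm
  rw [← this.integral_comp (MeasurableEquiv.measurableEmbedding _)]
  simp only [neg_mul, Function.comp_def]
  have key := GaussianFourier.integral_cexp_neg_mul_sum_add hb (fun i ↦ c₁ * (w₁ i) + c₂ * (w₂ i))
  convert key using 5 with _x y
  · rfl
  · simp only [MeasurableEquiv.symm_symm, MeasurableEquiv.coe_toLp,
      EuclideanSpace.norm_eq, PiLp.toLp_apply, Real.norm_eq_abs, sq_abs, neg_mul,
      neg_inj, mul_eq_mul_left_iff]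
    norm_cast
    left
    rw [sq_sqrt (Finset.sum_nonneg (fun i _hi ↦ by positivity))]
  · simp [PiLp.inner_apply, MeasurableEquiv.symm_symm, MeasurableEquiv.coe_toLp, Finset.mul_sum, mul_assoc,
      Finset.sum_add_distrib, add_mul]
    congr 1 <;> exact Finset.sum_congr rfl fun i _ => by ring
  · have hn : ∀ w : EuclideanSpace ℝ ι, ((‖w‖ : ℝ) : ℂ) ^ 2 = ∑ i, (w i : ℂ) * (w i) := by
      intro w
      norm_cast
      rw [EuclideanSpace.norm_eq, sq_sqrt (Finset.sum_nonneg (fun i _hi ↦ by positivity))]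
      simp [sq]
    have hi : ((⟪w₁, w₂⟫ : ℝ) : ℂ) = ∑ i, (w₁ i : ℂ) * (w₂ i) := by
      norm_cast
      simp [PiLp.inner_apply, mul_comm]
    rw [hn w₁, hn w₂, hi, Finset.sum_congr rfl (fun i _ => by ring :
      ∀ i ∈ Finset.univ, (c₁ * (w₁ i) + c₂ * (w₂ i)) ^ 2
        = c₁ ^ 2 * ((w₁ i : ℂ) * (w₁ i)) + 2 * c₁ * c₂ * ((w₁ i : ℂ) * (w₂ i))
          + c₂ ^ 2 * ((w₂ i : ℂ) * (w₂ i))), Finset.sum_add_distrib, Finset.sum_add_distrib]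
    simp only [← Finset.mul_sum]

theorem gauss_two {E : Type*} [NormedAddCommGroup E] [InnerProductSpace ℝ E]
    [FiniteDimensional ℝ E] [MeasurableSpace E] [BorelSpace E] {b : ℂ} (hb : 0 < b.re)
    (c₁ c₂ : ℂ) (w₁ w₂ : E) :
    ∫ v : E, Complex.exp (-b * ‖v‖ ^ 2 + (c₁ * ⟪w₁, v⟫ + c₂ * ⟪w₂, v⟫)) =
      (π / b) ^ (finrank ℝ E / 2 : ℂ) *
        Complex.exp ((c₁ ^ 2 * ‖w₁‖ ^ 2 + 2 * c₁ * c₂ * ⟪w₁, w₂⟫ + c₂ ^ 2 * ‖w₂‖ ^ 2)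
          / (4 * b)) := by
  let e := (stdOrthonormalBasis ℝ E).repr.symm
  rw [← e.measurePreserving.integral_comp e.toHomeomorph.measurableEmbedding]
  have key := gauss_two_eucl hb c₁ c₂ (e.symm w₁) (e.symm w₂)
  have h1 : ∀ (w : E) (v : EuclideanSpace ℝ (Fin (finrank ℝ E))),
      (⟪w, e v⟫ : ℝ) = ⟪e.symm w, v⟫ := fun w v => by
    conv_lhs => rw [← e.apply_symm_apply w, e.inner_map_map]
  simp only [Function.comp_def, LinearIsometryEquiv.norm_map, h1]
  rw [key]
  simp [LinearIsometryEquiv.norm_map, LinearIsometryEquiv.inner_map_map]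

theorem gauss_two_cont {E : Type*} [NormedAddCommGroup E] [InnerProductSpace ℝ E]
    (b c₁ c₂ : ℂ) (w₁ w₂ : E) :
    Continuous (fun v : E => Complex.exp (-b * ‖v‖ ^ 2 + (c₁ * ⟪w₁, v⟫ + c₂ * ⟪w₂, v⟫))) := by
  apply Complex.continuous_exp.comp
  have h1 : Continuous fun v : E => (‖v‖ : ℂ) :=
    Complex.continuous_ofReal.comp continuous_norm
  have h2 : Continuous fun v : E => ((⟪w₁, v⟫ : ℝ) : ℂ) :=
    Complex.continuous_ofReal.comp (innerSL ℝ w₁).continuous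
  have h3 : Continuous fun v : E => ((⟪w₂, v⟫ : ℝ) : ℂ) :=
    Complex.continuous_ofReal.comp (innerSL ℝ w₂).continuous
  exact ((continuous_const.mul (h1.pow 2)).add
    ((continuous_const.mul h2).add (continuous_const.mul h3)))

theorem gauss_two_integrable {E : Type*} [NormedAddCommGroup E] [InnerProductSpace ℝ E]
    [FiniteDimensional ℝ E] [MeasurableSpace E] [BorelSpace E] {b : ℂ} (hb : 0 < b.re)
    (c₁ c₂ : ℂ) (w₁ w₂ : E) :
    Integrable (fun v : E => Complex.exp (-b * ‖v‖ ^ 2 + (c₁ * ⟪w₁, v⟫ + c₂ * ⟪w₂, v⟫))) := by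
  have hb' : (0:ℝ) < ((b.re : ℂ)).re := by simpa using hb
  have h := (GaussianFourier.integrable_cexp_neg_mul_sq_norm_add (V := E) hb' 1
      (c₁.re • w₁ + c₂.re • w₂ : E)).norm
  apply Integrable.mono' h (gauss_two_cont b c₁ c₂ w₁ w₂).aestronglyMeasurable
  filter_upwards with v
  rw [Complex.norm_exp, Complex.norm_exp]
  apply le_of_eq
  apply congrArg Real.exp
  simp [Complex.add_re, Complex.mul_re, ← Complex.ofReal_pow, inner_add_left,
    real_inner_smul_left]

/-- Amplitude of a coherent state (finite-dimensional case): let `H` be a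
finite-dimensional complex inner product space, `g := Re⟨·,·⟩`, and `V ⊆ H` a real-linear
subspace with `Im⟨v,w⟩ = 0` on `V` and `H = V ⊕ i·V` (every `φ ∈ H` is uniquely
`a + i·b` with `a, b ∈ V`). Let `ν` be the probability measure on `V` obtained by
normalizing `exp(−(1/4)·g(φ,φ))·dμ(φ)` for a Haar measure `μ` on `V`. Then for
`ξ = ξᴿ + i·ξᴵ` with `ξᴿ, ξᴵ ∈ V`, the function `φ ↦ exp((1/2)⟨ξ,φ⟩)` is `ν`-integrable
with `∫ exp((1/2)⟨ξ,φ⟩) dν(φ)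
  = exp((1/4)g(ξᴿ,ξᴿ) − (1/4)g(ξᴵ,ξᴵ) − (i/2)g(ξᴿ,ξᴵ))`. -/
theorem coherent_state_amplitude {H : Type*} [NormedAddCommGroup H]
    [InnerProductSpace ℂ H] [FiniteDimensional ℂ H]
    (V : Submodule ℝ H) [MeasurableSpace V] [BorelSpace V]
    (hiso : ∀ v ∈ V, ∀ w ∈ V, (inner ℂ v w : ℂ).im = 0)
    (hdec : ∀ φ : H, ∃! p : V × V, φ = (p.1 : H) + Complex.I • (p.2 : H))
    (μ : Measure V) [μ.IsAddHaarMeasure]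
    (ν : Measure V)
    (hν : ν = (μ.withDensity
        (fun φ => ENNReal.ofReal (Real.exp (-(1 / 4) * (inner ℂ (φ : H) (φ : H) : ℂ).re)))
        Set.univ)⁻¹ •
      μ.withDensity
        (fun φ => ENNReal.ofReal (Real.exp (-(1 / 4) * (inner ℂ (φ : H) (φ : H) : ℂ).re))))
    (ξ : H) (ξR ξI : V) (hξ : ξ = (ξR : H) + Complex.I • (ξI : H)) :
    Integrable (fun φ : V => Complex.exp ((1 / 2) * (inner ℂ ξ (φ : H) : ℂ))) ν ∧
    ∫ φ : V, Complex.exp ((1 / 2) * (inner ℂ ξ (φ : H) : ℂ)) ∂ν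
      = Complex.exp ((1 / 4) * ((inner ℂ (ξR : H) (ξR : H) : ℂ).re : ℂ)
          - (1 / 4) * ((inner ℂ (ξI : H) (ξI : H) : ℂ).re : ℂ)
          - (Complex.I / 2) * ((inner ℂ (ξR : H) (ξI : H) : ℂ).re : ℂ)) := by
  letI : InnerProductSpace ℝ H := InnerProductSpace.rclikeToReal ℂ H
  letI : InnerProductSpace ℝ ↥V := Submodule.innerProductSpace V
  -- real inner product on V vs complex inner product on H
  have hre : ∀ v w : ↥V, (inner ℂ (v : H) (w : H) : ℂ).re = (⟪v, w⟫ : ℝ) := fun v w => rfl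
  have hnormsq : ∀ φ : ↥V, (inner ℂ (φ : H) (φ : H) : ℂ).re = ‖φ‖ ^ 2 := fun φ => by
    rw [hre, real_inner_self_eq_norm_sq]
  have hreal : ∀ v w : ↥V, (inner ℂ (v : H) (w : H) : ℂ) = ((⟪v, w⟫ : ℝ) : ℂ) := by
    intro v w
    apply Complex.ext
    · simpa using hre v w
    · simpa using hiso (v : H) v.2 (w : H) w.2
  set c₁ : ℂ := 1 / 2 with hc₁
  set c₂ : ℂ := -(Complex.I / 2) with hc₂
  have hfun : ∀ φ : ↥V, (1 / 2 : ℂ) * (inner ℂ ξ (φ : H) : ℂ)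
      = c₁ * (⟪ξR, φ⟫ : ℝ) + c₂ * (⟪ξI, φ⟫ : ℝ) := by
    intro φ
    rw [hξ, inner_add_left, inner_smul_left, hreal ξR φ, hreal ξI φ]
    simp only [Complex.conj_I, hc₁, hc₂]
    ring
  set ρ : ↥V → ℝ≥0∞ :=
    fun φ => ENNReal.ofReal (Real.exp (-(1 / 4) * (inner ℂ (φ : H) (φ : H) : ℂ).re)) with hρdef
  set c : NNReal := Measure.addHaarScalarFactor μ (volume : Measure ↥V) with hcdef
  have hμ : μ = c • (volume : Measure ↥V) :=
    Measure.isAddLeftInvariant_eq_smul μ volume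
  have hcpos : 0 < c := Measure.addHaarScalarFactor_pos_of_isAddHaarMeasure μ volume
  set T : Measure ↥V := (volume : Measure ↥V).withDensity ρ with hTdef
  have hμρ : μ.withDensity ρ = (c : ℝ≥0∞) • T := by
    conv_lhs => rw [hμ]
    rw [ENNReal.smul_def, withDensity_smul_measure]
  have hc0 : (c : ℝ≥0∞) ≠ 0 := by exact_mod_cast hcpos.ne'
  have hctop : (c : ℝ≥0∞) ≠ ⊤ := ENNReal.coe_ne_top
  have hν' : ν = (T Set.univ)⁻¹ • T := by
    rw [hν, hμρ]
    rw [Measure.smul_apply, smul_eq_mul, smul_smul,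
      ENNReal.mul_inv (Or.inl hc0) (Or.inl hctop)]
    congr 1
    rw [mul_comm ((c : ℝ≥0∞))⁻¹, mul_assoc, ENNReal.inv_mul_cancel hc0 hctop, mul_one]
  clear hν hμρ hμ hcpos hc0 hctop hcdef
  -- the density as an ℝ≥0-valued function
  set w : ↥V → ℝ≥0 := fun φ => Real.toNNReal (Real.exp (-(1 / 4) * ‖φ‖ ^ 2)) with hwdef
  have hρw : ρ = fun φ => ((w φ : ℝ≥0) : ℝ≥0∞) := by
    funext φ
    simp only [hρdef, hwdef, hnormsq φ]
    rfl
  have hwmeas : Measurable w :=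
    (continuous_real_toNNReal.comp (Real.continuous_exp.comp
      (continuous_const.mul ((continuous_norm : Continuous fun φ : ↥V => ‖φ‖).pow 2)))).measurable
  have hb : (0 : ℝ) < ((1 / 4 : ℂ)).re := by norm_num
  set G : ↥V → ℂ := fun φ =>
    Complex.exp (-(1 / 4 : ℂ) * ‖φ‖ ^ 2 + (c₁ * (⟪ξR, φ⟫ : ℝ) + c₂ * (⟪ξI, φ⟫ : ℝ))) with hGdef
  have hGint : Integrable G volume := gauss_two_integrable hb c₁ c₂ ξR ξI
  have hGval := gauss_two hb c₁ c₂ ξR ξI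
  have hsmul : ∀ φ : ↥V,
      (w φ : ℝ) • Complex.exp ((1 / 2 : ℂ) * (inner ℂ ξ (φ : H) : ℂ)) = G φ := by
    intro φ
    rw [hfun φ, hwdef]
    simp only [Real.coe_toNNReal _ (Real.exp_pos _).le]
    rw [Complex.real_smul, Complex.ofReal_exp, ← Complex.exp_add]
    congr 1
    push_cast
    ring
  have hInt_T : Integrable (fun φ : ↥V => Complex.exp ((1 / 2 : ℂ) * (inner ℂ ξ (φ : H) : ℂ))) T := by
    rw [hTdef, hρw, integrable_withDensity_iff_integrable_smul hwmeas]
    apply hGint.congr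
    filter_upwards with φ
    rw [NNReal.smul_def, hsmul φ]
  -- the normalizing constant
  set Z : ℝ := ∫ φ : ↥V, Real.exp (-(1 / 4) * ‖φ‖ ^ 2) with hZdef
  have hρint : Integrable (fun φ : ↥V => Real.exp (-(1 / 4) * ‖φ‖ ^ 2)) volume := by
    have h := (gauss_two_integrable (E := ↥V) hb 0 0 0 0).norm
    apply h.congr
    filter_upwards with φ
    rw [Complex.norm_exp]
    congr 1
    simp [← Complex.ofReal_pow]
  have hZ : Z = (π / (1 / 4)) ^ ((Module.finrank ℝ ↥V : ℝ) / 2) := by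
    rw [hZdef]
    have := GaussianFourier.integral_rexp_neg_mul_sq_norm (V := ↥V) (by norm_num : (0:ℝ) < 1/4)
    simpa using this
  have hZpos : 0 < Z := by
    rw [hZ]
    apply Real.rpow_pos_of_pos
    positivity
  have hTuniv : T Set.univ = ENNReal.ofReal Z := by
    rw [hTdef, withDensity_apply _ MeasurableSet.univ, setLIntegral_univ]
    have hh : ∀ φ : ↥V, ρ φ = ENNReal.ofReal (Real.exp (-(1 / 4) * ‖φ‖ ^ 2)) := fun φ => by
      simp only [hρdef, hnormsq φ]
    simp only [hh]
    rw [← MeasureTheory.ofReal_integral_eq_lintegral_ofReal hρint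
      (by filter_upwards with φ using (Real.exp_pos _).le)]
  have hT0 : T Set.univ ≠ 0 := by
    rw [hTuniv]
    simp [ENNReal.ofReal_pos.mpr hZpos]
    linarith
  have hTtop : T Set.univ ≠ ⊤ := by rw [hTuniv]; exact ENNReal.ofReal_ne_top
  constructor
  · rw [hν']
    refine (integrable_smul_measure ?_ ?_).mpr hInt_T
    · exact ENNReal.inv_ne_zero.mpr hTtop
    · exact ENNReal.inv_ne_top.mpr hT0
  · rw [hν', integral_smul_measure, hTuniv]
    have hIT : (∫ φ : ↥V, Complex.exp ((1 / 2 : ℂ) * (inner ℂ ξ (φ : H) : ℂ)) ∂T)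
        = ((π : ℂ) / (1 / 4)) ^ ((Module.finrank ℝ ↥V : ℂ) / 2) *
          Complex.exp ((c₁ ^ 2 * ((‖ξR‖ : ℝ) : ℂ) ^ 2 + 2 * c₁ * c₂ * ((⟪ξR, ξI⟫ : ℝ) : ℂ)
            + c₂ ^ 2 * ((‖ξI‖ : ℝ) : ℂ) ^ 2) / (4 * (1 / 4))) := by
      rw [hTdef, hρw, integral_withDensity_eq_integral_smul hwmeas]
      simp only [NNReal.smul_def, hsmul, hGdef]
      exact hGval
    rw [hIT, ENNReal.toReal_inv, ENNReal.toReal_ofReal hZpos.le]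
    have hZC : (Z : ℂ) = ((π : ℂ) / (1 / 4)) ^ ((Module.finrank ℝ ↥V : ℂ) / 2) := by
      rw [hZ, Complex.ofReal_cpow (by positivity)]
      push_cast
      ring_nf
    have hne : ((π : ℂ) / (1 / 4)) ^ ((Module.finrank ℝ ↥V : ℂ) / 2) ≠ 0 := by
      rw [← hZC]
      exact_mod_cast hZpos.ne'
    rw [Complex.real_smul, Complex.ofReal_inv, hZC, ← mul_assoc, inv_mul_cancel₀ hne, one_mul]
    congr 1
    simp only [hnormsq, hre, hc₁, hc₂, Complex.ofReal_pow]
    push_cast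
    ring_nf
    simp [Complex.I_sq]
    ring_nf
end
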